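/- Let f : ℝ → ℝ be twice continuously differentiable with f ∈ L²(ℝ), and suppose that −f''(y) + f(y) − 5·Q(y)^4·f(y) = 0 for all y ∈ ℝ. Then there exists a ∈ ℝ such that f = a·Q'. -/

import Mathlib

open MeasureTheory

noncomputable def Q (x : ℝ) : ℝ := (3 / (Real.cosh (2 * x)) ^ 2) ^ ((1 : ℝ) / 4)

noncomputable def Q1 (x : ℝ) : ℝ :=
  -((3:ℝ) ^ ((1:ℝ)/4)) * (Real.sinh (2*x) * (Real.cosh (2*x)) ^ (-(3:ℝ)/2))

noncomputable def Q2 (x : ℝ) : ℝ :=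
  (3:ℝ) ^ ((1:ℝ)/4) * ((Real.cosh (2*x)) ^ (-(1:ℝ)/2) - 3 * (Real.cosh (2*x)) ^ (-(5:ℝ)/2))

lemma ch_pos (x : ℝ) : 0 < Real.cosh (2*x) := Real.cosh_pos _
lemma ch_ge_one (x : ℝ) : 1 ≤ Real.cosh (2*x) := Real.one_le_cosh _

lemma Qeq (x : ℝ) : Q x = (3:ℝ) ^ ((1:ℝ)/4) * (Real.cosh (2*x)) ^ (-(1:ℝ)/2) := by
  unfold Q
  have hc := ch_pos x
  rw [Real.div_rpow (by norm_num) (by positivity), ← Real.rpow_natCast (Real.cosh (2*x)) 2,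
    ← Real.rpow_mul hc.le, div_eq_mul_inv, ← Real.rpow_neg hc.le]
  norm_num

lemma hch (x : ℝ) : HasDerivAt (fun x : ℝ => Real.cosh (2*x)) (2 * Real.sinh (2*x)) x := by
  have h : HasDerivAt (fun x : ℝ => 2*x) 2 x := by
    simpa using (hasDerivAt_id x).const_mul (2:ℝ)
  have := (Real.hasDerivAt_cosh (2*x)).comp x h
  simpa [Function.comp_def, mul_comm] using this

lemma rpow_shift (x : ℝ) (a b : ℝ) (h : a = b + 1) :
    Real.cosh (2*x) ^ a = Real.cosh (2*x) * Real.cosh (2*x) ^ b := by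
  rw [h, Real.rpow_add (ch_pos x), Real.rpow_one, mul_comm]

lemma hQ1 (x : ℝ) : HasDerivAt Q (Q1 x) x := by
  have h := ((hch x).rpow_const (p := -(1:ℝ)/2) (Or.inl (ch_pos x).ne')).const_mul ((3:ℝ) ^ ((1:ℝ)/4))
  have : (fun x => (3:ℝ) ^ ((1:ℝ)/4) * (Real.cosh (2*x)) ^ (-(1:ℝ)/2)) = Q := by
    funext y; rw [Qeq]
  rw [this] at h
  refine h.congr_deriv ?_
  unfold Q1
  rw [show (-(1:ℝ)/2 - 1) = -(3:ℝ)/2 by norm_num]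
  ring

lemma hsh (x : ℝ) : HasDerivAt (fun x : ℝ => Real.sinh (2*x)) (2 * Real.cosh (2*x)) x := by
  have h : HasDerivAt (fun x : ℝ => 2*x) 2 x := by
    simpa using (hasDerivAt_id x).const_mul (2:ℝ)
  have := (Real.hasDerivAt_sinh (2*x)).comp x h
  simpa [Function.comp_def, mul_comm] using this

lemma hQ2 (x : ℝ) : HasDerivAt Q1 (Q2 x) x := by
  have hr := (hch x).rpow_const (p := -(3:ℝ)/2) (Or.inl (ch_pos x).ne')
  have h := (((hsh x).mul hr).const_mul (-((3:ℝ) ^ ((1:ℝ)/4))))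
  have heq : (fun x => -((3:ℝ) ^ ((1:ℝ)/4)) * (Real.sinh (2*x) * (Real.cosh (2*x)) ^ (-(3:ℝ)/2)))
      = Q1 := rfl
  simp only [Pi.mul_apply] at h
  rw [heq] at h
  refine h.congr_deriv ?_
  symm
  rw [show (-(3:ℝ)/2 - 1) = -(5:ℝ)/2 by norm_num]
  have hA : Real.cosh (2*x) ^ (-(1:ℝ)/2)
      = Real.cosh (2*x) * Real.cosh (2*x) ^ (-(3:ℝ)/2) := rpow_shift x _ _ (by norm_num)
  have hB : Real.cosh (2*x) ^ (-(3:ℝ)/2)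
      = Real.cosh (2*x) * Real.cosh (2*x) ^ (-(5:ℝ)/2) := rpow_shift x _ _ (by norm_num)
  have hs2 : Real.sinh (2*x) ^ 2 = Real.cosh (2*x) ^ 2 - 1 := Real.sinh_sq _
  unfold Q2
  linear_combination ((3:ℝ) ^ ((1:ℝ)/4)) * hA
    + (3 * (3:ℝ) ^ ((1:ℝ)/4) * Real.cosh (2*x)) * hB
    - (3 * (3:ℝ) ^ ((1:ℝ)/4) * Real.cosh (2*x) ^ (-(5:ℝ)/2)) * hs2

lemma Qpow4 (x : ℝ) : Q x ^ 4 = 3 / Real.cosh (2*x) ^ 2 := by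
  unfold Q
  rw [← Real.rpow_natCast ((3 / Real.cosh (2 * x) ^ 2) ^ ((1:ℝ)/4)) 4,
    ← Real.rpow_mul (by positivity)]
  norm_num

lemma Q4_nonneg (x : ℝ) : 0 ≤ Q x ^ 4 := by rw [Qpow4]; positivity

lemma Q4_le3 (x : ℝ) : Q x ^ 4 ≤ 3 := by
  rw [Qpow4]
  have h1 : (1:ℝ) ≤ Real.cosh (2*x) ^ 2 := one_le_pow₀ (ch_ge_one x)
  rw [div_le_iff₀ (by positivity)]
  nlinarith

lemma Q2_eq (x : ℝ) : Q2 x = Q x - Q x ^ 5 := by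
  have h5 : Q x ^ 5 = 3 * ((3:ℝ) ^ ((1:ℝ)/4) * Real.cosh (2*x) ^ (-(5:ℝ)/2)) := by
    rw [Qeq, mul_pow, ← Real.rpow_natCast ((3:ℝ) ^ ((1:ℝ)/4)) 5, ← Real.rpow_natCast (Real.cosh (2*x) ^ (-(1:ℝ)/2)) 5,
      ← Real.rpow_mul (by norm_num : (0:ℝ) ≤ 3), ← Real.rpow_mul (ch_pos x).le]
    rw [show ((1:ℝ)/4 * (5:ℕ)) = 1 + 1/4 by push_cast; norm_num,
      show ((-(1:ℝ)/2) * (5:ℕ)) = -(5:ℝ)/2 by push_cast; norm_num,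
      Real.rpow_add (by norm_num : (0:ℝ) < 3), Real.rpow_one]
    ring
  rw [h5, Qeq]
  unfold Q2
  ring

lemma hQ3 (x : ℝ) : HasDerivAt Q2 ((1 - 5 * Q x ^ 4) * Q1 x) x := by
  have h : HasDerivAt (fun y => Q y - Q y ^ 5) (Q1 x - 5 * Q x ^ 4 * Q1 x) x := by
    have := (hQ1 x).sub ((hQ1 x).pow 5)
    exact this.congr_deriv (by norm_num)
  have : Q2 = fun y => Q y - Q y ^ 5 := funext Q2_eq
  rw [this]
  convert h using 1; ring

lemma Q1_zero : Q1 0 = 0 := by simp [Q1]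

lemma Q2_zero : Q2 0 = -2 * (3:ℝ) ^ ((1:ℝ)/4) := by
  simp [Q2, Real.one_rpow]
  ring

lemma Q2_zero_ne : Q2 0 ≠ 0 := by
  rw [Q2_zero]
  have : (0:ℝ) < (3:ℝ) ^ ((1:ℝ)/4) := Real.rpow_pos_of_pos (by norm_num) _
  nlinarith

lemma K_le_two : (3:ℝ) ^ ((1:ℝ)/4) ≤ 2 := by
  rw [show (2:ℝ) = (16:ℝ) ^ ((1:ℝ)/4) by
    rw [show (16:ℝ) = 2^(4:ℕ) by norm_num, ← Real.rpow_natCast 2 4, ← Real.rpow_mul (by norm_num)]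
    norm_num]
  exact Real.rpow_le_rpow (by norm_num) (by norm_num) (by norm_num)

lemma rpow_le_one' (x : ℝ) (p : ℝ) (hp : p ≤ 0) : Real.cosh (2*x) ^ p ≤ 1 :=
  Real.rpow_le_one_of_one_le_of_nonpos (ch_ge_one x) hp

lemma Q1_bound (x : ℝ) : |Q1 x| ≤ 2 := by
  have hK : (0:ℝ) < (3:ℝ) ^ ((1:ℝ)/4) := Real.rpow_pos_of_pos (by norm_num) _
  have h1 : |Q1 x| = (3:ℝ) ^ ((1:ℝ)/4) * (|Real.sinh (2*x)| * Real.cosh (2*x) ^ (-(3:ℝ)/2)) := by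
    unfold Q1
    rw [abs_mul, abs_mul, abs_neg, abs_of_pos hK,
      abs_of_pos (Real.rpow_pos_of_pos (ch_pos x) _)]
  have h2 : |Real.sinh (2*x)| ≤ Real.cosh (2*x) := by
    rcases abs_cases (Real.sinh (2*x)) with ⟨h,_⟩|⟨h,_⟩ <;> rw [h]
    · exact (Real.sinh_lt_cosh _).le
    · have h1 := Real.cosh_add_sinh (2*x)
      have h2 := Real.exp_pos (2*x); linarith
  have h3 : |Real.sinh (2*x)| * Real.cosh (2*x) ^ (-(3:ℝ)/2)
      ≤ Real.cosh (2*x) * Real.cosh (2*x) ^ (-(3:ℝ)/2) :=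
    mul_le_mul_of_nonneg_right h2 (Real.rpow_pos_of_pos (ch_pos x) _).le
  rw [← rpow_shift x (-(1:ℝ)/2) (-(3:ℝ)/2) (by norm_num)] at h3
  have h4 := rpow_le_one' x (-(1:ℝ)/2) (by norm_num)
  calc |Q1 x| ≤ (3:ℝ) ^ ((1:ℝ)/4) * 1 := by
        rw [h1]; exact mul_le_mul_of_nonneg_left (h3.trans h4) hK.le
    _ ≤ 2 := by rw [mul_one]; exact K_le_two

lemma diffQ1 : Differentiable ℝ Q1 := fun x => (hQ2 x).differentiableAt
lemma diffQ2 : Differentiable ℝ Q2 := fun x => (hQ3 x).differentiableAt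
lemma contQ1 : Continuous Q1 := diffQ1.continuous
lemma contQ2 : Continuous Q2 := diffQ2.continuous

lemma cosh_lb (x : ℝ) : 1 + x^2 ≤ 2 * Real.cosh (2*x) := by
  have h1 : (1 + |x|)^2 ≤ Real.exp (2*|x|) := by
    rw [two_mul, Real.exp_add]
    have := Real.add_one_le_exp |x|
    nlinarith [abs_nonneg x, Real.exp_pos |x|]
  have h2 : Real.exp (2*|x|) ≤ 2 * Real.cosh (2*x) := by
    rw [Real.cosh_eq]
    rcases abs_cases x with ⟨h,_⟩|⟨h,_⟩ <;> rw [h] <;>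
      [skip; rw [show 2*(-x) = -(2*x) by ring]] <;>
      nlinarith [Real.exp_pos (2*x), Real.exp_pos (-(2*x))]
  nlinarith [abs_nonneg x, sq_abs x]
  
lemma Q2_sq_le (x : ℝ) : Q2 x ^ 2 ≤ 128 * (1 + x^2)⁻¹ := by
  have hK : (0:ℝ) < (3:ℝ) ^ ((1:ℝ)/4) := Real.rpow_pos_of_pos (by norm_num) _
  set a := Real.cosh (2*x) ^ (-(1:ℝ)/2) with ha
  set d := Real.cosh (2*x) ^ (-(5:ℝ)/2) with hd
  have hda : d ≤ a := Real.rpow_le_rpow_of_exponent_le (ch_ge_one x) (by norm_num)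
  have hd0 : 0 < d := Real.rpow_pos_of_pos (ch_pos x) _
  have ha0 : 0 < a := Real.rpow_pos_of_pos (ch_pos x) _
  have habs : |Q2 x| ≤ 8 * a := by
    have h1 : |Q2 x| ≤ (3:ℝ) ^ ((1:ℝ)/4) * (a + 3*d) := by
      unfold Q2
      rw [abs_mul, abs_of_pos hK]
      have : |a - 3*d| ≤ a + 3*d := by
        rw [abs_sub_le_iff]; constructor <;> nlinarith
      exact mul_le_mul_of_nonneg_left this hK.le
    calc |Q2 x| ≤ (3:ℝ) ^ ((1:ℝ)/4) * (a + 3*d) := h1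
      _ ≤ 2 * (4*a) := by
          have := K_le_two
          nlinarith
      _ = 8 * a := by ring
  have hsq : Q2 x ^ 2 ≤ 64 * a^2 := by
    have := sq_le_sq' (neg_le_of_abs_le habs |>.trans_eq' (by ring_nf)) (le_of_abs_le habs)
    nlinarith [abs_nonneg (Q2 x), sq_abs (Q2 x)]
  have ha2 : a^2 = (Real.cosh (2*x))⁻¹ := by
    rw [ha, ← Real.rpow_natCast (Real.cosh (2*x) ^ (-(1:ℝ)/2)) 2, ← Real.rpow_mul (ch_pos x).le]
    rw [show (-(1:ℝ)/2 * (2:ℕ)) = -1 by push_cast; norm_num, Real.rpow_neg_one]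
  have hc : (Real.cosh (2*x))⁻¹ ≤ 2 * (1 + x^2)⁻¹ := by
    have hx2 : (0:ℝ) < 1 + x^2 := by positivity
    rw [inv_le_iff_one_le_mul₀' (ch_pos x)]
    have h := cosh_lb x
    have h2 : (1 + x^2) * (1+x^2)⁻¹ = 1 := mul_inv_cancel₀ hx2.ne'
    nlinarith [inv_pos.mpr hx2, ch_pos x]
  calc Q2 x ^2 ≤ 64 * a^2 := hsq
    _ = 64 * (Real.cosh (2*x))⁻¹ := by rw [ha2]
    _ ≤ 64 * (2 * (1+x^2)⁻¹) := by
        have := hc; nlinarith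
    _ = 128 * (1+x^2)⁻¹ := by ring

lemma intQ2sq : Integrable (fun x => Q2 x ^ 2) := by
  have hg : Integrable (fun x : ℝ => 128 * (1+x^2)⁻¹) := integrable_inv_one_add_sq.const_mul 128
  refine hg.mono' ((contQ2.pow 2).aestronglyMeasurable) ?_
  filter_upwards with x
  rw [Real.norm_eq_abs, abs_of_nonneg (sq_nonneg _)]
  exact Q2_sq_le x

/-- The kernel of the linearized operator `L f = -f'' + f - 5 Q⁴ f`, among `C²` functions
in `L²(ℝ)`, is spanned by `Q'`. -/
theorem kernel_L_eq_span_Q' (f : ℝ → ℝ) (hf : ContDiff ℝ 2 f)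
    (hfL2 : MemLp f 2 volume)
    (heq : ∀ y : ℝ, -(deriv (deriv f) y) + f y - 5 * (Q y) ^ 4 * f y = 0) :
    ∃ a : ℝ, ∀ y : ℝ, f y = a * deriv Q y := by
  have hf2 : ContDiff ℝ (1+1) f := by
    convert hf using 2
    norm_num
  have hdf : Differentiable ℝ f := hf.differentiable (by norm_num)
  have hdf' : Differentiable ℝ (deriv f) :=
    ((contDiff_succ_iff_deriv.mp hf2).2.2).differentiable one_ne_zero
  have hfc : Continuous f := hdf.continuous
  have hf'' : ∀ y, deriv (deriv f) y = (1 - 5 * Q y ^ 4) * f y := by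
    intro y; have := heq y; nlinarith [heq y]
  -- the Wronskian of f and Q1 is constant
  set W : ℝ → ℝ := fun y => f y * Q2 y - deriv f y * Q1 y with hWdef
  have hWd : ∀ y, HasDerivAt W 0 y := by
    intro y
    have h1 : HasDerivAt f (deriv f y) y := (hdf y).hasDerivAt
    have h2 : HasDerivAt (deriv f) (deriv (deriv f) y) y := (hdf' y).hasDerivAt
    have h3 := (h1.mul (hQ3 y)).sub (h2.mul (hQ2 y))
    refine h3.congr_deriv ?_
    rw [hf'' y]; ring
  set c : ℝ := W 0 with hcdef
  have hWc : ∀ y, W y = c := by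
    intro y
    exact is_const_of_deriv_eq_zero (fun z => (hWd z).differentiableAt)
      (fun z => (hWd z).deriv) y 0
  -- key identity : f T * Q1 T = ∫_0^T (2 f Q2 - c)
  have key : ∀ T : ℝ, f T * Q1 T = ∫ y in (0:ℝ)..T, (2 * f y * Q2 y - c) := by
    intro T
    have hFd : ∀ y ∈ Set.uIcc (0:ℝ) T,
        HasDerivAt (fun z => f z * Q1 z) (2 * f y * Q2 y - c) y := by
      intro y _
      have h1 := (hdf y).hasDerivAt.mul (hQ2 y)
      refine h1.congr_deriv ?_
      have hw := hWc y
      simp only [hWdef] at hw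
      linarith
    have hInt : IntervalIntegrable (fun y => 2 * f y * Q2 y - c) volume 0 T :=
      (((continuous_const.mul hfc).mul contQ2).sub continuous_const).intervalIntegrable 0 T
    rw [intervalIntegral.integral_eq_sub_of_hasDerivAt hFd hInt, Q1_zero]
    ring
  -- integrability of f * Q2
  have hfsq : Integrable (fun x => f x ^ 2) volume :=
    (memLp_two_iff_integrable_sq hfL2.aestronglyMeasurable).mp hfL2
  have hfQ2 : Integrable (fun x => f x * Q2 x) volume := by
    have hsum : Integrable (fun x => (1/2) * (f x ^ 2 + Q2 x ^ 2)) volume := by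
      have := (hfsq.add intQ2sq).const_mul (1/2)
      simpa using this
    refine hsum.mono' ((hfc.mul contQ2).aestronglyMeasurable) ?_
    filter_upwards with x
    rw [Real.norm_eq_abs, abs_mul]
    have h1 := sq_nonneg (|f x| - |Q2 x|)
    have h2 := sq_abs (f x); have h3 := sq_abs (Q2 x)
    nlinarith [abs_nonneg (f x), abs_nonneg (Q2 x)]
  set B : ℝ := ∫ x, |f x * Q2 x| with hBdef
  have hB0 : 0 ≤ B := integral_nonneg (fun x => abs_nonneg _)
  have hB : ∀ T : ℝ, 0 ≤ T → |∫ y in (0:ℝ)..T, f y * Q2 y| ≤ B := by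
    intro T hT
    rw [intervalIntegral.integral_of_le hT]
    calc |∫ y in Set.Ioc (0:ℝ) T, f y * Q2 y|
        ≤ ∫ y in Set.Ioc (0:ℝ) T, |f y * Q2 y| := by
          have h1 := norm_integral_le_integral_norm
            (μ := volume.restrict (Set.Ioc (0:ℝ) T)) (fun y => f y * Q2 y)
          simp only [Real.norm_eq_abs] at h1
          exact h1
      _ ≤ B := by
          exact setIntegral_le_integral hfQ2.abs (ae_of_all _ fun x => abs_nonneg _)
  -- c = 0
  have hc0 : c = 0 := by
    by_contra hc
    have hcabs : 0 < |c| := abs_pos.mpr hc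
    set T1 : ℝ := (2*B + 2)/|c| with hT1def
    have hT1 : 0 ≤ T1 := by positivity
    have hlow : ∀ T, T1 ≤ T → 1 ≤ f T ^ 2 := by
      intro T hT
      have hT0 : 0 ≤ T := hT1.trans hT
      have hsplit : ∫ y in (0:ℝ)..T, (2 * f y * Q2 y - c)
          = 2 * (∫ y in (0:ℝ)..T, f y * Q2 y) - c * T := by
        rw [intervalIntegral.integral_sub (f := fun y => 2 * f y * Q2 y)
          (((continuous_const.mul hfc).mul contQ2).intervalIntegrable 0 T)
          (intervalIntegrable_const),
          intervalIntegral.integral_const, smul_eq_mul, sub_zero]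
        rw [show (fun y => 2 * f y * Q2 y) = (fun y => 2 * (f y * Q2 y)) by funext y; ring,
          intervalIntegral.integral_const_mul]
        ring
      have hkey := key T
      rw [hsplit] at hkey
      -- |f T * Q1 T| ≥ |c| T - 2 B
      have h1 : |c| * T - 2*B ≤ |f T * Q1 T| := by
        rw [hkey]
        have h2 := hB T hT0
        have h3 : |c * T| = |c| * T := by rw [abs_mul, abs_of_nonneg hT0]
        calc |c| * T - 2*B = |c * T| - 2*B := by rw [h3]
          _ ≤ |2 * (∫ y in (0:ℝ)..T, f y * Q2 y) - c * T| := by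
              have := abs_sub_abs_le_abs_sub (c*T) (2 * (∫ y in (0:ℝ)..T, f y * Q2 y))
              have h4 : |2 * (∫ y in (0:ℝ)..T, f y * Q2 y)| ≤ 2*B := by
                rw [abs_mul]; rw [abs_two]; linarith
              have h5 := abs_sub_comm (c*T) (2 * (∫ y in (0:ℝ)..T, f y * Q2 y))
              linarith
      have h6 : |f T * Q1 T| ≤ |f T| * 2 := by
        rw [abs_mul]
        exact mul_le_mul_of_nonneg_left (Q1_bound T) (abs_nonneg _)
      have h7 : |c| * T1 = 2*B + 2 := by
        rw [hT1def]; field_simp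
      have h8 : 2*B + 2 ≤ |c| * T := by
        rw [← h7]; exact mul_le_mul_of_nonneg_left hT hcabs.le
      have h9 : 1 ≤ |f T| := by nlinarith
      nlinarith [sq_abs (f T)]
    -- contradiction with integrability
    have hione : IntegrableOn (fun _ : ℝ => (1:ℝ)) (Set.Ioi T1) volume := by
      refine (hfsq.integrableOn).mono' ?_ ?_
      · exact aestronglyMeasurable_const
      · rw [ae_restrict_iff' measurableSet_Ioi]
        filter_upwards with x hx
        rw [norm_one]
        exact hlow x (le_of_lt hx)
    rw [integrableOn_const_iff] at hione
    rcases hione with h | h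
    · norm_num at h
    · rw [Real.volume_Ioi] at h
      exact (lt_irrefl _ h).elim
  -- f 0 = 0
  have hf0 : f 0 = 0 := by
    have hw := hWc 0
    rw [hc0] at hw
    simp only [hWdef] at hw
    rw [Q1_zero] at hw
    have h0 : f 0 * Q2 0 = 0 := by linarith
    rcases mul_eq_zero.mp h0 with h | h
    · exact h
    · exact absurd h Q2_zero_ne
  -- define a and g
  set a : ℝ := deriv f 0 / Q2 0 with hadef
  refine ⟨a, fun y => ?_⟩
  set g : ℝ → ℝ := fun y => f y - a * Q1 y with hgdef
  set g1 : ℝ → ℝ := fun y => deriv f y - a * Q2 y with hg1def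
  have hg0 : g 0 = 0 := by simp [hgdef, Q1_zero, hf0]
  have hg10 : g1 0 = 0 := by
    simp only [hg1def, hadef]
    rw [div_mul_cancel₀ _ Q2_zero_ne, sub_self]
  have hgd : ∀ z, HasDerivAt g (g1 z) z := by
    intro z
    exact (hdf z).hasDerivAt.sub ((hQ2 z).const_mul a)
  have hg1d : ∀ z, HasDerivAt g1 ((1 - 5 * Q z ^ 4) * g z) z := by
    intro z
    have h1 := (hdf' z).hasDerivAt.sub ((hQ3 z).const_mul a)
    refine h1.congr_deriv ?_
    rw [hf'' z]
    simp only [hgdef]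
    ring
  set h : ℝ → ℝ := fun y => g y ^ 2 + g1 y ^ 2 with hhdef
  have hhd : ∀ z, HasDerivAt h (2 * g z * g1 z * (2 - 5 * Q z ^ 4)) z := by
    intro z
    have h1 := ((hgd z).pow 2).add ((hg1d z).pow 2)
    refine h1.congr_deriv ?_
    push_cast
    ring
  have hhnn : ∀ z, 0 ≤ h z := fun z => by positivity
  have hbound : ∀ z, |2 * g z * g1 z * (2 - 5 * Q z ^ 4)| ≤ 17 * h z := by
    intro z
    have h1 := Q4_nonneg z
    have h2 := Q4_le3 z
    simp only [hhdef]
    rw [abs_le]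
    have p1 : 0 ≤ (13 - (2 - 5 * Q z ^ 4)) * (g z + g1 z)^2 :=
      mul_nonneg (by nlinarith) (sq_nonneg _)
    have p2 : 0 ≤ (13 + (2 - 5 * Q z ^ 4)) * (g z - g1 z)^2 :=
      mul_nonneg (by nlinarith) (sq_nonneg _)
    have p3 : 0 ≤ (13 - (2 - 5 * Q z ^ 4)) * (g z - g1 z)^2 :=
      mul_nonneg (by nlinarith) (sq_nonneg _)
    have p4 : 0 ≤ (13 + (2 - 5 * Q z ^ 4)) * (g z + g1 z)^2 :=
      mul_nonneg (by nlinarith) (sq_nonneg _)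
    constructor <;> nlinarith [p1, p2, p3, p4]
  -- exponential decay auxiliary functions
  have hexp : ∀ (b z : ℝ), HasDerivAt (fun y => Real.exp (b*y)) (b * Real.exp (b*z)) z := by
    intro b z
    have hb : HasDerivAt (fun y : ℝ => b*y) b z := by
      simpa using (hasDerivAt_id z).const_mul b
    have := (Real.hasDerivAt_exp (b*z)).comp z hb
    simpa [Function.comp_def, mul_comm] using this
  have hzero : ∀ z, h z = 0 := by
    intro z
    rcases le_or_gt 0 z with hz | hz
    · -- forward: φ = h * exp(-17 y) antitone
      set φ : ℝ → ℝ := fun y => h y * Real.exp (-17 * y) with hφdef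
      have hφd : ∀ w, HasDerivAt φ
          ((2 * g w * g1 w * (2 - 5 * Q w ^ 4) - 17 * h w) * Real.exp (-17 * w)) w := by
        intro w
        have := (hhd w).mul (hexp (-17) w)
        refine this.congr_deriv ?_
        ring
      have hmono : Antitone φ := by
        apply antitone_of_deriv_nonpos (fun w => (hφd w).differentiableAt)
        intro w
        rw [(hφd w).deriv]
        have h1 := hbound w
        have h2 := Real.exp_pos (-17 * w)
        have h3 : 2 * g w * g1 w * (2 - 5 * Q w ^ 4) - 17 * h w ≤ 0 := by
          have := le_of_abs_le h1; linarith
        exact mul_nonpos_of_nonpos_of_nonneg h3 h2.le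
      have h4 : φ z ≤ φ 0 := hmono hz
      have h5 : φ 0 = 0 := by simp [hφdef, hhdef, hg0, hg10]
      have h6 : 0 ≤ φ z := mul_nonneg (hhnn z) (Real.exp_pos _).le
      have h7 : φ z = 0 := le_antisymm (h4.trans_eq h5) h6
      have h8 := Real.exp_pos (-17 * z)
      by_contra hne
      have hpos : 0 < h z := lt_of_le_of_ne (hhnn z) (Ne.symm hne)
      simp only [hφdef] at h7
      nlinarith [mul_pos hpos h8]
    · -- backward: ψ = h * exp(17 y) monotone
      set ψ : ℝ → ℝ := fun y => h y * Real.exp (17 * y) with hψdef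
      have hψd : ∀ w, HasDerivAt ψ
          ((2 * g w * g1 w * (2 - 5 * Q w ^ 4) + 17 * h w) * Real.exp (17 * w)) w := by
        intro w
        have := (hhd w).mul (hexp 17 w)
        refine this.congr_deriv ?_
        ring
      have hmono : Monotone ψ := by
        apply monotone_of_deriv_nonneg (fun w => (hψd w).differentiableAt)
        intro w
        rw [(hψd w).deriv]
        have h1 := hbound w
        have h2 := Real.exp_pos (17 * w)
        have h3 : 0 ≤ 2 * g w * g1 w * (2 - 5 * Q w ^ 4) + 17 * h w := by
          have := neg_abs_le (2 * g w * g1 w * (2 - 5 * Q w ^ 4)); linarith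
        exact mul_nonneg h3 h2.le
      have h4 : ψ z ≤ ψ 0 := hmono hz.le
      have h5 : ψ 0 = 0 := by simp [hψdef, hhdef, hg0, hg10]
      have h6 : 0 ≤ ψ z := mul_nonneg (hhnn z) (Real.exp_pos _).le
      have h7 : ψ z = 0 := le_antisymm (h4.trans_eq h5) h6
      have h8 := Real.exp_pos (17 * z)
      by_contra hne
      have hpos : 0 < h z := lt_of_le_of_ne (hhnn z) (Ne.symm hne)
      simp only [hψdef] at h7
      nlinarith [mul_pos hpos h8]
  have hgz : g y = 0 := by
    have := hzero y
    simp only [hhdef] at this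
    nlinarith [sq_nonneg (g y), sq_nonneg (g1 y)]
  have : deriv Q y = Q1 y := (hQ1 y).deriv
  rw [this]
  simp only [hgdef] at hgz
  linarith
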